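/- Let g be a real Lie algebra with inner product ⟨·,·⟩, and let m = m₁ ⊕ m₂ be an orthogonal decomposition of a subspace m ⊆ g with [m₁, m₂] ⊆ m₁ (projections of brackets of m₁ with m₂ lie in m₁). Define the modified inner product ⟨y,z⟩_λ = ⟨y₁,z₁⟩ + λ⟨y₂,z₂⟩ for λ > 0, where y = y₁ + y₂ and z = z₁ + z₂ are the decompositions. Suppose X ∈ m₂ satisfies, for all y,z ∈ m, ⟨[y,X]_m, z⟩ + ⟨[z,X]_m, y⟩ = 0 and ⟨[y,z]_m, X⟩ = 0, and additionally [y₁, X]_m ∈ m₁ for all y₁ ∈ m₁. Then for all y,z ∈ m: ⟨[y,X]_m, z⟩_λ + ⟨[z,X]_m, y⟩_λ = 0 and ⟨[y,z]_m, X⟩_λ = 0. -/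

import Mathlib

open scoped RealInnerProductSpace

/-- A Lie algebra bracket on a real inner product space: a bilinear, alternating
map satisfying the Jacobi (Leibniz) identity. -/
structure LieBracketOn (g : Type*) [NormedAddCommGroup g] [InnerProductSpace ℝ g] where
  br : g →ₗ[ℝ] g →ₗ[ℝ] g
  alt : ∀ x : g, br x x = 0
  jacobi : ∀ x y z : g, br x (br y z) = br (br x y) z + br y (br x z)

/-- The Berwald condition for `X ∈ m₂` is preserved under the one-parameter
deformation `⟨·,·⟩_λ` of the inner product, given `[m₁, m₂] ⊆ m₁`. -/
theorem stmt_4 {g : Type*} [NormedAddCommGroup g] [InnerProductSpace ℝ g]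
    [FiniteDimensional ℝ g] (L : LieBracketOn g)
    (m₁ m₂ : Submodule ℝ g) (horth : m₁ ≤ m₂ᗮ)
    (m : Submodule ℝ g) (hm : m = m₁ ⊔ m₂)
    (hbr : ∀ u ∈ m₁, ∀ v ∈ m₂, (m.orthogonalProjectionOnto (L.br u v) : g) ∈ m₁)
    (lam : ℝ) (hlam : 0 < lam)
    (innerlam : g → g → ℝ)
    (hinnerlam : ∀ y z : g, innerlam y z =
      ⟪(m₁.orthogonalProjectionOnto y : g), (m₁.orthogonalProjectionOnto z : g)⟫
        + lam * ⟪(m₂.orthogonalProjectionOnto y : g), (m₂.orthogonalProjectionOnto z : g)⟫)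
    (X : g) (hX : X ∈ m₂)
    (hB1 : ∀ y z : g, y ∈ m → z ∈ m →
      ⟪(m.orthogonalProjectionOnto (L.br y X) : g), z⟫
        + ⟪(m.orthogonalProjectionOnto (L.br z X) : g), y⟫ = 0)
    (hB2 : ∀ y z : g, y ∈ m → z ∈ m →
      ⟪(m.orthogonalProjectionOnto (L.br y z) : g), X⟫ = 0)
    (hm1X : ∀ y₁ ∈ m₁, (m.orthogonalProjectionOnto (L.br y₁ X) : g) ∈ m₁) :
    ∀ y z : g, y ∈ m → z ∈ m →
      (innerlam (m.orthogonalProjectionOnto (L.br y X) : g) z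
          + innerlam (m.orthogonalProjectionOnto (L.br z X) : g) y = 0
        ∧ innerlam (m.orthogonalProjectionOnto (L.br y z) : g) X = 0) := by
  subst hm
  set M := m₁ ⊔ m₂ with hM
  have hsub1 : m₁ ≤ M := le_sup_left
  have hsub2 : m₂ ≤ M := le_sup_right
  have hor : ∀ a ∈ m₁, ∀ b ∈ m₂, ⟪a, b⟫ = 0 := by
    intro a ha b hb
    have h := (Submodule.mem_orthogonal m₂ a).mp (horth ha) b hb
    rw [real_inner_comm]; exact h
  have hle : m₂ ≤ m₁ᗮ := by
    intro b hb
    rw [Submodule.mem_orthogonal]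
    intro u hu
    exact hor u hu b hb
  have hdecomp : ∀ w ∈ M,
      (m₁.orthogonalProjectionOnto w : g) + (m₂.orthogonalProjectionOnto w : g) = w := by
    intro w hw
    obtain ⟨a, ha, b, hb, rfl⟩ := Submodule.mem_sup.mp hw
    have h1 : (m₁.orthogonalProjectionOnto (a + b) : g) = a := by
      rw [map_add, Submodule.coe_add, (show (m₁.orthogonalProjectionOnto a : g) = a by exact Submodule.starProjection_eq_self_iff.mpr ha),
        Submodule.orthogonalProjectionOnto_apply_of_mem_orthogonal (hle hb)]
      simp
    have h2 : (m₂.orthogonalProjectionOnto (a + b) : g) = b := by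
      rw [map_add, Submodule.coe_add, (show (m₂.orthogonalProjectionOnto b : g) = b by exact Submodule.starProjection_eq_self_iff.mpr hb),
        Submodule.orthogonalProjectionOnto_apply_of_mem_orthogonal (horth ha)]
      simp
    rw [h1, h2]
  have hlam1 : ∀ w ∈ m₁, ∀ z ∈ M, innerlam w z = ⟪w, z⟫ := by
    intro w hw z hz
    rw [hinnerlam, (show (m₁.orthogonalProjectionOnto w : g) = w by exact Submodule.starProjection_eq_self_iff.mpr hw),
      Submodule.orthogonalProjectionOnto_apply_of_mem_orthogonal (horth hw)]
    have hz2 : ⟪w, z⟫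
        = ⟪w, (m₁.orthogonalProjectionOnto z : g)⟫ + ⟪w, (m₂.orthogonalProjectionOnto z : g)⟫ := by
      rw [← inner_add_right, hdecomp z hz]
    rw [hz2, hor w hw _ (Submodule.coe_mem _)]
    simp
  have hlam2 : ∀ w ∈ m₂, ∀ z ∈ M, innerlam w z = lam * ⟪w, z⟫ := by
    intro w hw z hz
    rw [hinnerlam, (show (m₂.orthogonalProjectionOnto w : g) = w by exact Submodule.starProjection_eq_self_iff.mpr hw),
      Submodule.orthogonalProjectionOnto_apply_of_mem_orthogonal (hle hw)]
    have h0 : ⟪w, (m₁.orthogonalProjectionOnto z : g)⟫ = 0 := by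
      rw [real_inner_comm]; exact hor _ (Submodule.coe_mem _) w hw
    have hz2 : ⟪w, z⟫
        = ⟪w, (m₁.orthogonalProjectionOnto z : g)⟫ + ⟪w, (m₂.orthogonalProjectionOnto z : g)⟫ := by
      rw [← inner_add_right, hdecomp z hz]
    rw [hz2, h0]
    simp
  have hadd : ∀ u v z : g, innerlam (u + v) z = innerlam u z + innerlam v z := by
    intro u v z
    simp only [hinnerlam, map_add, Submodule.coe_add, inner_add_left]
    ring
  have hmem2 : ∀ w ∈ M, (∀ a ∈ m₁, ⟪w, a⟫ = 0) → w ∈ m₂ := by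
    intro w hw h
    have hwo : w ∈ m₁ᗮ := by
      rw [Submodule.mem_orthogonal]
      intro u hu
      rw [real_inner_comm]; exact h u hu
    have h0 : (m₁.orthogonalProjectionOnto w : g) = 0 := by
      rw [Submodule.orthogonalProjectionOnto_apply_of_mem_orthogonal hwo]
      simp
    have hd := hdecomp w hw
    rw [h0, zero_add] at hd
    rw [← hd]; exact Submodule.coe_mem _
  have hF2 : ∀ b ∈ m₂, (M.orthogonalProjectionOnto (L.br b X) : g) ∈ m₂ := by
    intro b hb
    apply hmem2 _ (Submodule.coe_mem _)
    intro a ha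
    have h1 := hB1 b a (hsub2 hb) (hsub1 ha)
    have h2 : ⟪(M.orthogonalProjectionOnto (L.br a X) : g), b⟫ = 0 :=
      hor _ (hm1X a ha) b hb
    linarith
  intro y z hy hz
  obtain ⟨y₁, hy1, y₂, hy2, rfl⟩ := Submodule.mem_sup.mp hy
  obtain ⟨z₁, hz1, z₂, hz2, rfl⟩ := Submodule.mem_sup.mp hz
  have hXM : X ∈ M := hsub2 hX
  constructor
  · -- first claim
    have hby : (M.orthogonalProjectionOnto (L.br (y₁ + y₂) X) : g)
        = (M.orthogonalProjectionOnto (L.br y₁ X) : g)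
          + (M.orthogonalProjectionOnto (L.br y₂ X) : g) := by
      have : L.br (y₁ + y₂) X = L.br y₁ X + L.br y₂ X := by
        rw [map_add]; rfl
      rw [this, map_add, Submodule.coe_add]
    have hbz : (M.orthogonalProjectionOnto (L.br (z₁ + z₂) X) : g)
        = (M.orthogonalProjectionOnto (L.br z₁ X) : g)
          + (M.orthogonalProjectionOnto (L.br z₂ X) : g) := by
      have : L.br (z₁ + z₂) X = L.br z₁ X + L.br z₂ X := by
        rw [map_add]; rfl
      rw [this, map_add, Submodule.coe_add]
    rw [hby, hbz, hadd, hadd,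
      hlam1 _ (hm1X y₁ hy1) _ hz, hlam2 _ (hF2 y₂ hy2) _ hz,
      hlam1 _ (hm1X z₁ hz1) _ hy, hlam2 _ (hF2 z₂ hz2) _ hy]
    have hA : ⟪(M.orthogonalProjectionOnto (L.br y₁ X) : g), z₁ + z₂⟫
        + ⟪(M.orthogonalProjectionOnto (L.br z₁ X) : g), y₁ + y₂⟫ = 0 := by
      rw [inner_add_right, inner_add_right,
        hor _ (hm1X y₁ hy1) z₂ hz2, hor _ (hm1X z₁ hz1) y₂ hy2]
      have := hB1 y₁ z₁ (hsub1 hy1) (hsub1 hz1)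
      linarith
    have hB : ⟪(M.orthogonalProjectionOnto (L.br y₂ X) : g), z₁ + z₂⟫
        + ⟪(M.orthogonalProjectionOnto (L.br z₂ X) : g), y₁ + y₂⟫ = 0 := by
      have e1 : ⟪(M.orthogonalProjectionOnto (L.br y₂ X) : g), z₁⟫ = 0 := by
        rw [real_inner_comm]; exact hor z₁ hz1 _ (hF2 y₂ hy2)
      have e2 : ⟪(M.orthogonalProjectionOnto (L.br z₂ X) : g), y₁⟫ = 0 := by
        rw [real_inner_comm]; exact hor y₁ hy1 _ (hF2 z₂ hz2)
      rw [inner_add_right, inner_add_right, e1, e2]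
      have := hB1 y₂ z₂ (hsub2 hy2) (hsub2 hz2)
      linarith
    nlinarith [hA, hB]
  · -- second claim
    have hwM : (M.orthogonalProjectionOnto (L.br (y₁ + y₂) (z₁ + z₂)) : g) ∈ M :=
      Submodule.coe_mem _
    rw [← hdecomp _ hwM, hadd,
      hlam1 _ (Submodule.coe_mem _) _ hXM, hlam2 _ (Submodule.coe_mem _) _ hXM,
      hor _ (Submodule.coe_mem _) X hX]
    have h2 : ⟪(m₂.orthogonalProjectionOnto
        (M.orthogonalProjectionOnto (L.br (y₁ + y₂) (z₁ + z₂)) : g) : g), X⟫ = 0 := by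
      have e : ⟪(m₁.orthogonalProjectionOnto
          (M.orthogonalProjectionOnto (L.br (y₁ + y₂) (z₁ + z₂)) : g) : g), X⟫ = 0 :=
        hor _ (Submodule.coe_mem _) X hX
      have hsum := hdecomp _ hwM
      have := hB2 (y₁ + y₂) (z₁ + z₂) hy hz
      have e2 : ⟪(m₁.orthogonalProjectionOnto
          (M.orthogonalProjectionOnto (L.br (y₁ + y₂) (z₁ + z₂)) : g) : g)
          + (m₂.orthogonalProjectionOnto
          (M.orthogonalProjectionOnto (L.br (y₁ + y₂) (z₁ + z₂)) : g) : g), X⟫ = 0 := by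
        rw [hsum]; exact this
      rw [inner_add_left, e] at e2
      linarith
    rw [h2]
    ring
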